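/- For every string x of length n and all natural numbers a, b, c: if (a, b + c) ∈ P_x then (a + b + O(log n), c) ∈ P_x. That is, any model for x can be traded: splitting a model of log-cardinality b+c into 2^b pieces of log-cardinality c yields a model of complexity at most a + b + O(log n) containing x. -/

import Mathlib

open scoped Classical

abbrev BinStr := List Bool

/-- A decompressor: a partial computable map (program, condition) ↦ output. -/
def IsDecompressor (D : BinStr → BinStr → Part BinStr) : Prop := Partrec₂ D

/-- Conditional Kolmogorov complexity with respect to decompressor `D`. -/
noncomputable def Cc (D : BinStr → BinStr → Part BinStr) (x y : BinStr) : ℕ :=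
  sInf { n | ∃ p : BinStr, p.length = n ∧ x ∈ D p y }

/-- A decompressor is universal if every decompressor is simulated via a prefix. -/
def IsUniversal (U : BinStr → BinStr → Part BinStr) : Prop :=
  IsDecompressor U ∧ ∀ D, IsDecompressor D → ∃ c : BinStr, ∀ p y, D p y = U (c ++ p) y

/-- Unconditional complexity. -/
noncomputable def C (U : BinStr → BinStr → Part BinStr) (x : BinStr) : ℕ := Cc U x []

/-- The fixed computable encoding of a finite set of strings as a string. -/
def codeSet (A : Finset BinStr) : BinStr := Nat.bits (Encodable.encode A)

/-- Complexity of a finite set of strings. -/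
noncomputable def CSet (U : BinStr → BinStr → Part BinStr) (A : Finset BinStr) : ℕ :=
  C U (codeSet A)

/-- The profile of a string `x`. -/
noncomputable def profile (U : BinStr → BinStr → Part BinStr) (x : BinStr) : Set (ℕ × ℕ) :=
  { ml | ∃ A : Finset BinStr, x ∈ A ∧ CSet U A ≤ ml.1 ∧ Nat.log 2 A.card ≤ ml.2 }

/-- Total conditional complexity `CT(x|y)`: length of a shortest *total* program mapping y to x. -/
noncomputable def CT (U : BinStr → BinStr → Part BinStr) (x y : BinStr) : ℕ :=
  sInf { n | ∃ p : BinStr, p.length = n ∧ (∀ y' : BinStr, (U p y').Dom) ∧ x ∈ U p y }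

/-- The ε-strong profile of `x`. -/
noncomputable def strongProfile (U : BinStr → BinStr → Part BinStr) (ε : ℕ) (x : BinStr) :
    Set (ℕ × ℕ) :=
  { ml | ∃ A : Finset BinStr, x ∈ A ∧ CT U (codeSet A) x ≤ ε ∧
      CSet U A ≤ ml.1 ∧ Nat.log 2 A.card ≤ ml.2 }

/-- `Ω_m`: the number of strings of complexity at most m. -/
noncomputable def Omega (U : BinStr → BinStr → Part BinStr) (m : ℕ) : ℕ :=
  Set.ncard { x : BinStr | C U x ≤ m }

/-- The Finset of all binary strings of length n. -/
def allStr : ℕ → Finset BinStr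
  | 0 => {[]}
  | n + 1 => (allStr n).image (List.cons true) ∪ (allStr n).image (List.cons false)

/-- The cylinder `{ u ++ v : v ∈ {0,1}^m }`. -/
def cyl (u : BinStr) (m : ℕ) : Finset BinStr := (allStr m).image (fun v => u ++ v)

-- Auxiliary machinery
def encLE (a b : BinStr) : Prop := Encodable.encode a ≤ Encodable.encode b

instance : DecidableRel encLE := fun a b => (inferInstance : Decidable (_ ≤ _))
instance : IsTrans BinStr encLE := ⟨fun _ _ _ h1 h2 => le_trans h1 h2⟩
instance : IsAntisymm BinStr encLE :=
  ⟨fun _ _ h1 h2 => Encodable.encode_injective (le_antisymm h1 h2)⟩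
instance : IsTotal BinStr encLE := ⟨fun a b => le_total _ _⟩

theorem sort_eq_self (r : BinStr → BinStr → Prop) (d : DecidableRel r) (t : IsTrans BinStr r)
    (an : IsAntisymm BinStr r) (tt : IsTotal BinStr r) (L : List BinStr) (h : L.Pairwise r) :
    @Multiset.sort _ (↑L) r d t an tt = L :=
  List.Perm.eq_of_pairwise' (@Multiset.pairwise_sort _ (↑L) r d t an tt) h
    (Multiset.coe_eq_coe.mp (@Multiset.sort_eq _ (↑L) r d t an tt))

theorem encode_toFinset (L : List BinStr) (hs : L.Pairwise encLE) (hn : L.Nodup) :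
    Encodable.encode L.toFinset = Encodable.encode L := by
  have h1 : Encodable.encode L.toFinset = encodeMultiset (L.toFinset.val) := rfl
  rw [h1]
  have h2 : (L.toFinset.val) = (↑L : Multiset BinStr) := by
    simp [List.toFinset, Multiset.toFinset, Multiset.dedup_eq_self.mpr (Multiset.coe_nodup.mpr hn)]
  rw [h2]
  unfold encodeMultiset
  exact congrArg Encodable.encode (sort_eq_self _ _ _ _ _ L hs)

def ofBits (l : BinStr) : ℕ := l.foldr (fun b n => 2 * n + cond b 1 0) 0

@[simp] theorem ofBits_nil : ofBits [] = 0 := rfl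
@[simp] theorem ofBits_cons (b : Bool) (l : BinStr) :
    ofBits (b :: l) = 2 * ofBits l + cond b 1 0 := rfl

theorem bits_cons {n : ℕ} (hn : n ≠ 0) : n.bits = n.bodd :: n.div2.bits := by
  conv_lhs => rw [← Nat.bit_bodd_div2 n]
  rw [Nat.bits_append_bit]
  intro h
  cases hb : n.bodd with
  | true => rfl
  | false =>
    exfalso; apply hn
    have := Nat.bodd_add_div2 n
    rw [hb, h] at this
    simpa using this.symm

theorem ofBits_bits (n : ℕ) : ofBits n.bits = n := by
  induction n using Nat.strong_induction_on with
  | _ n ih =>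
    rcases eq_or_ne n 0 with rfl | hn
    · simp [Nat.zero_bits]
    · rw [bits_cons hn, ofBits_cons, ih n.div2 (Nat.binaryRec_decreasing hn)]
      have := Nat.bodd_add_div2 n
      cases hb : n.bodd <;> rw [hb] at this <;> simp at this <;> simp [Bool.cond_false, Bool.cond_true] <;> omega

theorem ofBits_append_false (l : BinStr) (k : ℕ) :
    ofBits (l ++ List.replicate k false) = ofBits l := by
  induction l with
  | nil =>
    simp only [List.nil_append, ofBits_nil]
    induction k with
    | zero => rfl
    | succ k ih => simp [List.replicate_succ, ih]
  | cons b t ih => simp [ih]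

theorem bits_length_le {n k : ℕ} (h : n < 2 ^ k) : n.bits.length ≤ k := by
  induction k generalizing n with
  | zero => interval_cases n; simp [Nat.zero_bits]
  | succ k ih =>
    rcases eq_or_ne n 0 with rfl | hn
    · simp [Nat.zero_bits]
    · rw [bits_cons hn]
      simp only [List.length_cons, Nat.add_le_add_iff_right]
      apply ih
      have h2 : n.div2 = n / 2 := Nat.div2_val n
      omega

theorem primrec_take {α : Type} [Primcodable α] [Inhabited α] :
    Primrec₂ (fun (l : List α) (k : ℕ) => l.take k) := by
  have h : Primrec₂ (fun (l : List α) (k : ℕ) =>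
      (List.range (min k l.length)).map l.getI) := by
    apply Primrec.list_map (Primrec.list_range.comp
      (Primrec.nat_min.comp Primrec.snd (Primrec.list_length.comp Primrec.fst)))
    exact Primrec.list_getI.comp (Primrec.fst.comp Primrec.fst) Primrec.snd
  refine h.of_eq fun l k => ?_
  apply List.ext_getElem
  · simp
  · intro i h1 h2
    simp only [List.length_take] at h2
    rw [List.getElem_map, List.getElem_range,
      List.getI_eq_getElem _ (by omega : i < l.length), List.getElem_take]

theorem primrec_drop {α : Type} [Primcodable α] [Inhabited α] :
    Primrec₂ (fun (l : List α) (k : ℕ) => l.drop k) := by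
  have h : Primrec₂ (fun (l : List α) (k : ℕ) =>
      (List.range (l.length - k)).map (fun i => l.getI (k + i))) := by
    apply Primrec.list_map (Primrec.list_range.comp
      (Primrec.nat_sub.comp (Primrec.list_length.comp Primrec.fst) Primrec.snd))
    exact Primrec.list_getI.comp (Primrec.fst.comp Primrec.fst)
      (Primrec.nat_add.comp (Primrec.snd.comp Primrec.fst) Primrec.snd)
  refine h.of_eq fun l k => ?_
  apply List.ext_getElem
  · simp
  · intro i h1 h2
    simp only [List.length_drop] at h2
    rw [List.getElem_map, List.getElem_range,
      List.getI_eq_getElem _ (by omega : k + i < l.length), List.getElem_drop]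

theorem primrec_ofBits : Primrec ofBits := by
  have := Primrec.list_foldr (Primrec.id (α := List Bool)) (Primrec.const 0)
    (show Primrec₂ (fun (_ : List Bool) (p : Bool × ℕ) => 2 * p.2 + cond p.1 1 0) from
      Primrec.nat_add.comp
        (Primrec.nat_mul.comp (Primrec.const 2) (Primrec.snd.comp Primrec.snd))
        (Primrec.cond (Primrec.fst.comp Primrec.snd) (Primrec.const 1) (Primrec.const 0)))
  exact this.of_eq fun l => rfl

theorem primrec_pow2 : Primrec (fun k : ℕ => 2 ^ k) := by
  have h := Primrec.nat_rec₁ (α := ℕ) 1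
    (show Primrec₂ (fun (_ : ℕ) (ih : ℕ) => 2 * ih) from
      Primrec.nat_mul.comp (Primrec.const 2) Primrec.snd)
  refine h.of_eq fun k => ?_
  induction k with
  | zero => rfl
  | succ k ih => simp [pow_succ, ← ih]; ring

theorem primrec_bits : Primrec Nat.bits := by
  have hg : Primrec₂ (fun (_ : Unit) (IH : List (List Bool)) =>
      (if IH.length = 0 then [] else IH.length.bodd :: IH.getI IH.length.div2 : List Bool)) := by
    have hlen : Primrec (fun p : Unit × List (List Bool) => p.2.length) :=
      Primrec.list_length.comp Primrec.snd
    apply Primrec.ite (Primrec.eq.comp hlen (Primrec.const 0)) (Primrec.const [])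
    exact Primrec.list_cons.comp (Primrec.nat_bodd.comp hlen)
      (Primrec.list_getI.comp Primrec.snd (Primrec.nat_div2.comp hlen))
  have := Primrec.nat_strong_rec (fun (_ : Unit) (n : ℕ) => n.bits)
    (Primrec.option_some.comp₂ hg) ?_
  · exact this.comp (Primrec.const ()) Primrec.id
  · intro _ n
    simp only [List.map_map, Option.some.injEq]
    rcases eq_or_ne n 0 with rfl | hn
    · simp [Nat.zero_bits]
    · have hlen : ((List.range n).map (fun m => m.bits)).length = n := by simp
      rw [if_neg (by simpa [hlen] using hn), hlen]
      have hd : n.div2 < n := Nat.binaryRec_decreasing hn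
      rw [List.getI_eq_getElem _ (by simpa using hd)]
      simp only [List.getElem_map, List.getElem_range]
      exact (bits_cons hn).symm

def sd (l : BinStr) : BinStr := List.replicate l.length true ++ false :: l

def unsd (l : BinStr) : BinStr × BinStr :=
  ((l.drop (l.idxOf false + 1)).take (l.idxOf false),
   (l.drop (l.idxOf false + 1)).drop (l.idxOf false))

theorem sd_length (l : BinStr) : (sd l).length = 2 * l.length + 1 := by
  simp [sd]; ring

theorem unsd_sd (l r : BinStr) : unsd (sd l ++ r) = (l, r) := by
  have hidx : (sd l ++ r).idxOf false = l.length := by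
    simp only [sd, List.append_assoc, List.cons_append]
    induction l.length with
    | zero => simp [List.idxOf_cons]
    | succ k ih =>
      simp only [List.replicate_succ, List.cons_append, List.idxOf_cons] at ih ⊢
      simp at ih ⊢
      omega
  have hdrop : (sd l ++ r).drop (l.length + 1) = l ++ r := by
    simp only [sd, List.append_assoc, List.cons_append]
    rw [show l.length + 1 = (List.replicate l.length true).length + 1 by simp]
    induction l.length with
    | zero => simp
    | succ k ih => simpa [List.replicate_succ] using ih
  simp only [unsd, hidx, hdrop]
  rw [List.take_left' rfl, List.drop_left' rfl]

theorem primrec_unsd : Primrec unsd := by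
  have hidx : Primrec (fun l : BinStr => l.idxOf false) :=
    Primrec.list_idxOf.comp (Primrec.const false) Primrec.id
  have hdrop1 : Primrec (fun l : BinStr => l.drop (l.idxOf false + 1)) :=
    primrec_drop.comp Primrec.id (Primrec.succ.comp hidx)
  exact Primrec.pair (primrec_take.comp hdrop1 hidx) (primrec_drop.comp hdrop1 hidx)

def filtLen (n : ℕ) (L : List BinStr) : List BinStr := L.filter (fun y => y.length == n)

theorem primrec_filtLen : Primrec₂ filtLen := by
  have h : Primrec₂ (fun (n : ℕ) (L : List BinStr) =>
      L.foldr (fun a acc => if a.length = n then a :: acc else acc) []) := by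
    refine Primrec.list_foldr (α := ℕ × List BinStr) (β := BinStr) (σ := List BinStr)
      (f := fun p => p.2) (g := fun _ => [])
      (h := fun p q => if q.1.length = p.1 then q.1 :: q.2 else q.2)
      Primrec.snd (Primrec.const []) ?_
    apply Primrec.ite
      (Primrec.eq.comp (Primrec.list_length.comp (Primrec.fst.comp Primrec.snd))
        (Primrec.fst.comp Primrec.fst))
      (Primrec.list_cons.comp (Primrec.fst.comp Primrec.snd) (Primrec.snd.comp Primrec.snd))
      (Primrec.snd.comp Primrec.snd)
  refine h.of_eq fun n L => ?_
  induction L with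
  | nil => rfl
  | cons a t ih =>
    simp only [List.foldr_cons, ih, filtLen, List.filter_cons]
    by_cases h : a.length = n <;> simp [h]

theorem mem_allStr (y : BinStr) (n : ℕ) : y ∈ allStr n ↔ y.length = n := by
  induction n generalizing y with
  | zero => cases y <;> simp [allStr]
  | succ n ih =>
    cases y with
    | nil => simp [allStr]
    | cons b t =>
      cases b <;> simp [allStr, ih] <;>
        constructor <;> intro h <;> first
          | omega
          | (rcases h with ⟨a, ha, rfl⟩ | ⟨a, ha, h⟩ <;> simp_all)
          | exact Or.inl ⟨t, h, rfl⟩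
          | exact Or.inr ⟨t, h, rfl⟩

theorem card_allStr (n : ℕ) : (allStr n).card = 2 ^ n := by
  induction n with
  | zero => rfl
  | succ n ih =>
    rw [allStr, Finset.card_union_of_disjoint, Finset.card_image_of_injective _
      (fun a b h => by injection h), Finset.card_image_of_injective _
      (fun a b h => by injection h), ih, pow_succ]
    · ring
    · rw [Finset.disjoint_left]
      rintro a ha hb
      simp only [Finset.mem_image] at ha hb
      rcases ha with ⟨u, _, rfl⟩
      rcases hb with ⟨v, _, hv⟩
      injection hv with h1 _
      exact Bool.noConfusion h1

def qn (q : BinStr) : ℕ := ofBits (unsd q).1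
def qr1 (q : BinStr) : BinStr := (unsd q).2
def qc (q : BinStr) : ℕ := ofBits (unsd (qr1 q)).1
def qr2 (q : BinStr) : BinStr := (unsd (qr1 q)).2
def qb (q : BinStr) : ℕ := ofBits (unsd (qr2 q)).1
def qr3 (q : BinStr) : BinStr := (unsd (qr2 q)).2
def qi (q : BinStr) : ℕ := ofBits ((qr3 q).take (qb q + 1))
def prog (q : BinStr) : BinStr := (qr3 q).drop (qb q + 1)

def postAux (q : BinStr) (L : List BinStr) : BinStr :=
  Nat.bits (Encodable.encode
    (((filtLen (qn q) L).drop (qi q * 2 ^ qc q)).take (2 ^ qc q)))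

def post (q s : BinStr) : BinStr :=
  postAux q (((Encodable.decode (ofBits s)) : Option (List BinStr)).getD [])

def Dsplit (U : BinStr → BinStr → Part BinStr) (q : BinStr) (_ : BinStr) : Part BinStr :=
  (U (prog q) []).map (post q)

section
open Primrec

theorem primrec_qn : Primrec qn := primrec_ofBits.comp (fst.comp primrec_unsd)
theorem primrec_qr1 : Primrec qr1 := snd.comp primrec_unsd
theorem primrec_qc : Primrec qc := primrec_ofBits.comp (fst.comp (primrec_unsd.comp primrec_qr1))
theorem primrec_qr2 : Primrec qr2 := snd.comp (primrec_unsd.comp primrec_qr1)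
theorem primrec_qb : Primrec qb := primrec_ofBits.comp (fst.comp (primrec_unsd.comp primrec_qr2))
theorem primrec_qr3 : Primrec qr3 := snd.comp (primrec_unsd.comp primrec_qr2)
theorem primrec_qi : Primrec qi :=
  primrec_ofBits.comp (primrec_take.comp primrec_qr3 (succ.comp primrec_qb))
theorem primrec_prog : Primrec prog := primrec_drop.comp primrec_qr3 (succ.comp primrec_qb)

theorem primrec_postAux : Primrec₂ postAux := by
  have hfilt : Primrec (fun p : BinStr × List BinStr => filtLen (qn p.1) p.2) :=
    primrec_filtLen.comp (primrec_qn.comp fst) snd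
  have hdrop : Primrec (fun p : BinStr × List BinStr =>
      (filtLen (qn p.1) p.2).drop (qi p.1 * 2 ^ qc p.1)) :=
    primrec_drop.comp hfilt
      (nat_mul.comp (primrec_qi.comp fst) (primrec_pow2.comp (primrec_qc.comp fst)))
  exact primrec_bits.comp (Primrec.encode.comp
    (primrec_take.comp hdrop (primrec_pow2.comp (primrec_qc.comp fst))))

theorem computable_post : Computable₂ post := by
  have hinner : Computable (fun p : BinStr × BinStr =>
      ((Encodable.decode (ofBits p.2)) : Option (List BinStr)).getD []) :=
    option_getD.to_comp.comp
      (Computable.decode.comp ((primrec_ofBits.comp snd).to_comp)) (Computable.const [])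
  exact (primrec_postAux.to_comp.comp (Computable.fst) hinner).to₂

theorem partrec_Dsplit (U : BinStr → BinStr → Part BinStr) (hU : IsDecompressor U) :
    IsDecompressor (Dsplit U) := by
  have h1 : Partrec (fun p : BinStr × BinStr => U (prog p.1) []) :=
    hU.comp (primrec_prog.to_comp.comp Computable.fst) (Computable.const [])
  exact h1.map (computable_post.comp (Computable.fst.comp Computable.fst) Computable.snd).to₂

theorem partrec_id_decomp : IsDecompressor (fun p _ : BinStr => Part.some p) := by
  have : Computable (fun p : BinStr × BinStr => p.1) := Computable.fst
  exact this

end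


/-- the profile trade-off: (a, b+c) ∈ P_x implies (a+b+O(log n), c) ∈ P_x. -/
theorem profile_tradeoff
    (U : BinStr → BinStr → Part BinStr) (hU : IsUniversal U) :
    ∃ d : ℕ, ∀ (x : BinStr) (n a b c : ℕ), x.length = n →
      (a, b + c) ∈ profile U x →
      (a + b + d * (Nat.log 2 n + 1), c) ∈ profile U x := by
  obtain ⟨u, hu⟩ := hU.2 (Dsplit U) (partrec_Dsplit U hU.1)
  obtain ⟨e, he⟩ := hU.2 _ partrec_id_decomp
  refine ⟨u.length + 16, ?_⟩
  intro x n a b c hx hmem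
  simp only [profile, Set.mem_setOf_eq] at hmem ⊢
  obtain ⟨A, hxA, hCA, hcard⟩ := hmem
  -- a shortest program for codeSet A
  have hne : codeSet A ∈ U (e ++ codeSet A) [] := by
    rw [← he]; exact Part.mem_some _
  have hsinf := Nat.sInf_mem (s := { k | ∃ p : BinStr, p.length = k ∧ codeSet A ∈ U p [] })
    ⟨(e ++ codeSet A).length, ⟨_, rfl, hne⟩⟩
  obtain ⟨p, hplen, hpA⟩ := hsinf
  have hpa : p.length ≤ a := le_trans (le_of_eq hplen) hCA
  set b' := min b n with hb'
  set c' := min c n with hc'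
  -- the sorted list of A
  set L : List BinStr := Multiset.sort A.val encLE with hL
  have hLsort : L.Pairwise encLE := Multiset.pairwise_sort _ _
  have hLcoe : (↑L : Multiset BinStr) = A.val := Multiset.sort_eq _ _
  have hLnodup : L.Nodup := by
    rw [← Multiset.coe_nodup, hLcoe]; exact A.nodup
  have hLto : L.toFinset = A := by
    ext z
    rw [List.mem_toFinset, ← Multiset.mem_coe, hLcoe]
    exact Iff.rfl
  have hencA : Encodable.encode A = Encodable.encode L := by
    rw [← hLto]; exact encode_toFinset L hLsort hLnodup
  have hLlen : L.length = A.card := by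
    rw [hL, Multiset.length_sort]; rfl
  -- the filtered list
  set L' : List BinStr := filtLen n L with hL'
  have hL'sub : List.Sublist L' L := by
    rw [hL', filtLen]; exact List.filter_sublist
  have hL'nodup : L'.Nodup := hL'sub.nodup hLnodup
  have hxL' : x ∈ L' := by
    rw [hL', filtLen, List.mem_filter]
    refine ⟨?_, by simp [hx]⟩
    rw [← List.mem_toFinset, hLto]; exact hxA
  have hL'lens : ∀ y ∈ L', y.length = n := by
    intro y hy
    rw [hL', filtLen, List.mem_filter] at hy
    simpa using hy.2
  -- length bounds
  have hcardA : A.card < 2 ^ (b + c + 1) :=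
    lt_of_lt_of_le (Nat.lt_pow_succ_log_self (by norm_num) _)
      (Nat.pow_le_pow_right (by norm_num) (by omega))
  have hL'le1 : L'.length < 2 ^ (b + c + 1) :=
    lt_of_le_of_lt (le_trans hL'sub.length_le (le_of_eq hLlen)) hcardA
  have hL'le2 : L'.length ≤ 2 ^ n := by
    have hsubs : L'.toFinset ⊆ allStr n := by
      intro z hz
      rw [List.mem_toFinset] at hz
      rw [mem_allStr]
      exact hL'lens z hz
    calc L'.length = L'.toFinset.card := (List.toFinset_card_of_nodup hL'nodup).symm
      _ ≤ (allStr n).card := Finset.card_le_card hsubs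
      _ = 2 ^ n := card_allStr n
  -- position of x
  obtain ⟨r, hrlt, hrx⟩ := List.mem_iff_getElem.mp hxL'
  set i := r / 2 ^ c' with hi
  set j := r % 2 ^ c' with hj
  have hpow : 0 < 2 ^ c' := Nat.pow_pos (by norm_num)
  have hjlt : j < 2 ^ c' := Nat.mod_lt _ hpow
  have hij : 2 ^ c' * i + j = r := Nat.div_add_mod r (2 ^ c')
  -- the block
  set block : List BinStr := (L'.drop (i * 2 ^ c')).take (2 ^ c') with hblock
  have hmulcomm : i * 2 ^ c' = 2 ^ c' * i := Nat.mul_comm _ _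
  have hjblock : j < block.length := by
    rw [hblock, List.length_take, List.length_drop]
    omega
  have hblockx : block[j]'hjblock = x := by
    simp only [hblock, List.getElem_take, List.getElem_drop]
    rw [← hrx]
    congr 1
    omega
  have hblocksub : List.Sublist block L' := ((List.take_sublist _ _).trans (List.drop_sublist _ _))
  have hblocknodup : block.Nodup := hblocksub.nodup hL'nodup
  have hblocksort : block.Pairwise encLE :=
    List.Pairwise.sublist (hblocksub.trans hL'sub) hLsort
  set A' : Finset BinStr := block.toFinset with hA'
  have hxA' : x ∈ A' := by
    rw [hA', List.mem_toFinset, ← hblockx]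
    exact List.getElem_mem _
  have hencA' : Encodable.encode A' = Encodable.encode block :=
    encode_toFinset block hblocksort hblocknodup
  -- cardinality bound
  have hcard' : Nat.log 2 A'.card ≤ c := by
    have hbl : block.length ≤ 2 ^ c' := by
      rw [hblock, List.length_take]; omega
    have h1 : A'.card ≤ 2 ^ c' := by
      rw [hA']; exact le_trans (List.toFinset_card_le _) hbl
    calc Nat.log 2 A'.card ≤ Nat.log 2 (2 ^ c') := Nat.log_mono_right h1
      _ = c' := Nat.log_pow (by norm_num) _
      _ ≤ c := min_le_left _ _
  -- bound on i
  have hIi : i < 2 ^ (b' + 1) := by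
    rcases le_or_gt c n with hcn | hcn
    · have hc'c : c' = c := min_eq_left hcn
      rcases le_or_gt b n with hbn | hbn
      · have hb'b : b' = b := min_eq_left hbn
        rw [hb'b, hi, hc'c]
        refine (Nat.div_lt_iff_lt_mul (pow_pos two_pos c)).mpr ?_
        rw [← pow_add]
        have heq : b + 1 + c = b + c + 1 := by ring
        rw [heq]
        exact lt_trans hrlt hL'le1
      · have hb'n : b' = n := min_eq_right (le_of_lt hbn)
        rw [hb'n]
        calc i ≤ r := Nat.div_le_self _ _
          _ < 2 ^ n := lt_of_lt_of_le hrlt hL'le2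
          _ < 2 ^ (n + 1) := Nat.pow_lt_pow_right (by norm_num) (by omega)
    · have hc'n : c' = n := min_eq_right (le_of_lt hcn)
      have : i = 0 := by
        rw [hi, hc'n]
        exact Nat.div_eq_of_lt (lt_of_lt_of_le hrlt hL'le2)
      rw [this]
      exact Nat.pow_pos (by norm_num)
  -- the padded index
  set I : BinStr := Nat.bits i ++ List.replicate (b' + 1 - (Nat.bits i).length) false with hI
  have hIbits : (Nat.bits i).length ≤ b' + 1 := bits_length_le hIi
  have hIlen : I.length = b' + 1 := by
    rw [hI, List.length_append, List.length_replicate]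
    omega
  have hIof : ofBits I = i := by
    rw [hI, ofBits_append_false, ofBits_bits]
  -- the program
  set q : BinStr := sd (Nat.bits n) ++ (sd (Nat.bits c') ++ (sd (Nat.bits b') ++ (I ++ p)))
    with hq
  have hqn : qn q = n := by rw [qn, hq, unsd_sd]; exact ofBits_bits n
  have hqr1 : qr1 q = sd (Nat.bits c') ++ (sd (Nat.bits b') ++ (I ++ p)) := by
    rw [qr1, hq, unsd_sd]
  have hqc : qc q = c' := by rw [qc, hqr1, unsd_sd]; exact ofBits_bits c'
  have hqr2 : qr2 q = sd (Nat.bits b') ++ (I ++ p) := by rw [qr2, hqr1, unsd_sd]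
  have hqb : qb q = b' := by rw [qb, hqr2, unsd_sd]; exact ofBits_bits b'
  have hqr3 : qr3 q = I ++ p := by rw [qr3, hqr2, unsd_sd]
  have hqi : qi q = i := by
    rw [qi, hqr3, hqb, List.take_left' hIlen, hIof]
  have hprog : prog q = p := by
    rw [prog, hqr3, hqb, List.drop_left' hIlen]
  -- the decompressor computes codeSet A'
  have hpost : post q (codeSet A) = codeSet A' := by
    rw [post, codeSet, ofBits_bits, hencA, Encodable.encodek]
    rw [Option.getD_some, postAux, hqn, hqi, hqc]
    rw [codeSet, hencA']
  have hDq : codeSet A' ∈ Dsplit U q [] := by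
    rw [Dsplit, hprog]
    exact (Part.mem_map_iff _).mpr ⟨codeSet A, hpA, hpost⟩
  have hUq : codeSet A' ∈ U (u ++ q) [] := by rw [← hu]; exact hDq
  -- complexity bound
  have hCC : CSet U A' ≤ (u ++ q).length :=
    Nat.sInf_le ⟨u ++ q, rfl, hUq⟩
  have hlog : ∀ m : ℕ, m ≤ n → (Nat.bits m).length ≤ Nat.log 2 n + 1 := by
    intro m hm
    apply bits_length_le
    calc m ≤ n := hm
      _ < 2 ^ (Nat.log 2 n + 1) := Nat.lt_pow_succ_log_self (by norm_num) _
  have hqlen : (u ++ q).length ≤ u.length + 6 * (Nat.log 2 n + 1) + 3 + (b + 1) + a := by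
    have h1 := hlog n le_rfl
    have h2 := hlog c' (min_le_right _ _)
    have h3 := hlog b' (min_le_right _ _)
    have hb'le : b' ≤ b := min_le_left _ _
    rw [List.length_append, hq]
    simp only [List.length_append, sd_length, hIlen]
    omega
  refine ⟨A', hxA', ?_, hcard'⟩
  refine le_trans (le_trans hCC hqlen) ?_
  have expand : (u.length + 16) * (Nat.log 2 n + 1) =
      u.length * Nat.log 2 n + u.length + 16 * Nat.log 2 n + 16 := by ring
  omega
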